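/- Khintchine's inequality: let σ = (σ₁,…,σ_d) be independent Rademacher ±1 random variables and x ∈ ℝ^d. Then for every integer t ≥ 1, (E[|⟨σ,x⟩|^t])^{1/t} ≤ √t · ‖x‖₂. -/

import Mathlib

open Finset Nat

private lemma fact_two_mul (m : ℕ) : (2*m)! = (2*m-1)‼ * (2^m * m !) := by
  cases m with
  | zero => rfl
  | succ m =>
    have h1 : 2*(m+1) = (2*m+1)+1 := by ring
    rw [h1, Nat.factorial_eq_mul_doubleFactorial]
    have h2 : (2*m+1)+1 = 2*(m+1) := by ring
    rw [h2, Nat.doubleFactorial_two_mul]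
    have h3 : 2*(m+1)-1 = 2*m+1 := by omega
    rw [h3, mul_comm]

private lemma key_identity (k j : ℕ) (hj : j ≤ k) :
    (2*k).choose (2*j) * (2*j-1)‼ * (2*(k-j)-1)‼ = (2*k-1)‼ * k.choose j := by
  have hpos : 0 < 2^k * j ! * (k-j)! := by positivity
  apply Nat.eq_of_mul_eq_mul_right hpos
  have h1 : (2*k).choose (2*j) * (2*j)! * (2*k - 2*j)! = (2*k)! :=
    Nat.choose_mul_factorial_mul_factorial (by omega)
  have h2 : k.choose j * j ! * (k-j)! = k ! :=
    Nat.choose_mul_factorial_mul_factorial hj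
  have h4 : 2*k - 2*j = 2*(k-j) := by omega
  rw [h4] at h1
  have e1 := fact_two_mul j
  have e2 := fact_two_mul (k-j)
  have e3 := fact_two_mul k
  have e4 : 2^j * 2^(k-j) = 2^k := by rw [← pow_add]; congr 1; omega
  calc (2*k).choose (2*j) * (2*j-1)‼ * (2*(k-j)-1)‼ * (2^k * j ! * (k-j)!)
      = (2*k).choose (2*j) * ((2*j-1)‼ * (2^j * j !)) *
          ((2*(k-j)-1)‼ * (2^(k-j) * (k-j)!)) := by rw [← e4]; ring
    _ = (2*k).choose (2*j) * (2*j)! * (2*(k-j))! := by rw [← e1, ← e2]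
    _ = (2*k)! := h1
    _ = (2*k-1)‼ * (2^k * k !) := e3
    _ = (2*k-1)‼ * (2^k * (k.choose j * j ! * (k-j)!)) := by rw [h2]
    _ = (2*k-1)‼ * k.choose j * (2^k * j ! * (k-j)!) := by ring

private lemma key_ineq (k j : ℕ) (hj : j ≤ k) :
    (2*k).choose (2*j) * (2*(k-j)-1)‼ ≤ (2*k-1)‼ * k.choose j := by
  calc (2*k).choose (2*j) * (2*(k-j)-1)‼
      ≤ (2*k).choose (2*j) * (2*j-1)‼ * (2*(k-j)-1)‼ := by
        have h1 := Nat.doubleFactorial_pos (2*j-1)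
        calc (2*k).choose (2*j) * (2*(k-j)-1)‼
            = (2*k).choose (2*j) * 1 * (2*(k-j)-1)‼ := by ring
          _ ≤ (2*k).choose (2*j) * (2*j-1)‼ * (2*(k-j)-1)‼ :=
              Nat.mul_le_mul_right _ (Nat.mul_le_mul_left _ h1)
    _ = (2*k-1)‼ * k.choose j := key_identity k j hj

private lemma dfac_aux : ∀ k : ℕ, (2*k+1)‼ ≤ (2*k+1)^(k+1)
  | 0 => le_refl 1
  | (k+1) => by
    have h : 2*(k+1)+1 = (2*k+1)+2 := by ring
    rw [h, Nat.doubleFactorial_add_two]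
    calc (2*k+1+2) * (2*k+1)‼ ≤ (2*k+3) * (2*k+1)^(k+1) :=
          Nat.mul_le_mul_left _ (dfac_aux k)
      _ ≤ (2*k+3) * (2*k+3)^(k+1) :=
          Nat.mul_le_mul_left _ (Nat.pow_le_pow_left (by omega) _)
      _ = (2*k+1+2)^(k+1+1) := by ring

private lemma dfac_le (k t : ℕ) (hk : 1 ≤ k) (h : 2*k-1 ≤ t) : (2*k-1)‼ ≤ t^k := by
  obtain ⟨m, rfl⟩ := Nat.exists_eq_add_of_le hk
  have h1 : 2*(1+m)-1 = 2*m+1 := by omega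
  rw [h1]
  calc (2*m+1)‼ ≤ (2*m+1)^(m+1) := dfac_aux m
    _ ≤ t^(m+1) := Nat.pow_le_pow_left (by omega) _
    _ = t^(1+m) := by ring


private lemma sum_range_even (g : ℕ → ℝ) (k : ℕ) (h : ∀ m, Odd m → g m = 0) :
    ∑ m ∈ range (2*k+1), g m = ∑ j ∈ range (k+1), g (2*j) := by
  induction k with
  | zero => simp
  | succ k ih =>
    have h2 : 2*(k+1)+1 = (2*k+1)+1+1 := by ring
    rw [h2, Finset.sum_range_succ, Finset.sum_range_succ, ih,
      Finset.sum_range_succ (f := fun j => g (2*j)) (n := k+1),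
      h (2*k+1) ⟨k, by ring⟩]
    have h3 : 2*k+1+1 = 2*(k+1) := by ring
    rw [h3]; ring

private lemma even_pow_sum (S a : ℝ) (k : ℕ) :
    (S + a)^(2*k) + (S - a)^(2*k)
      = ∑ j ∈ range (k+1),
          2 * ((2*k).choose (2*j) : ℝ) * S^(2*(k-j)) * a^(2*j) := by
  have h1 : (S+a)^(2*k)
      = ∑ m ∈ range (2*k+1), a^m * S^(2*k-m) * ((2*k).choose m : ℝ) := by
    rw [add_comm S a, add_pow]
  have h2 : (S-a)^(2*k)
      = ∑ m ∈ range (2*k+1), (-a)^m * S^(2*k-m) * ((2*k).choose m : ℝ) := by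
    rw [sub_eq_add_neg, add_comm S (-a), add_pow]
  rw [h1, h2, ← Finset.sum_add_distrib]
  have h3 : ∀ m ∈ range (2*k+1),
      a^m * S^(2*k-m) * ((2*k).choose m : ℝ)
        + (-a)^m * S^(2*k-m) * ((2*k).choose m : ℝ)
      = (a^m + (-a)^m) * S^(2*k-m) * ((2*k).choose m : ℝ) := fun m _ => by ring
  rw [Finset.sum_congr rfl h3,
    sum_range_even (fun m => (a^m + (-a)^m) * S^(2*k-m) * ((2*k).choose m : ℝ)) k
      (fun m hm => by beta_reduce; rw [hm.neg_pow]; ring)]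
  refine Finset.sum_congr rfl fun j hj => ?_
  have hjk : j ≤ k := Finset.mem_range_succ_iff.mp hj
  have e1 : 2*k - 2*j = 2*(k-j) := by omega
  have e2 : (-a)^(2*j) = a^(2*j) := by
    rw [pow_mul, pow_mul, neg_sq]
  rw [e1, e2]; ring

private lemma moment : ∀ (d : ℕ) (x : Fin d → ℝ) (k : ℕ),
    ∑ σ : Fin d → Bool, (∑ i, (if σ i then (1:ℝ) else -1) * x i)^(2*k)
      ≤ 2^d * (((2*k-1)‼ : ℝ) * (∑ i, x i^2)^k)
  | 0, x, k => by
    simp only [Finset.univ_unique, Finset.sum_const, Finset.univ_eq_empty,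
      Finset.sum_empty]
    cases k with
    | zero => simp
    | succ k =>
      have : (0:ℝ)^(2*(k+1)) = 0 := by
        rw [zero_pow]; omega
      simp only [Finset.card_singleton, one_smul] at *
      rw [this]  -- ?
      positivity
  | (d+1), x, k => by
    set S : (Fin d → Bool) → ℝ :=
      fun τ => ∑ i : Fin d, (if τ i then (1:ℝ) else -1) * x i.succ with hS
    set a : ℝ := x 0 with ha
    set s' : ℝ := ∑ i : Fin d, x i.succ ^ 2 with hs'
    have hs'0 : 0 ≤ s' := by positivity
    have step0 : ∑ σ : Fin (d+1) → Bool,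
          (∑ i, (if σ i then (1:ℝ) else -1) * x i)^(2*k)
        = ∑ τ : Fin d → Bool, ((S τ + a)^(2*k) + (S τ - a)^(2*k)) := by
      rw [Fintype.sum_equiv (Fin.consEquiv (fun _ : Fin (d+1) => Bool)).symm
        (fun σ => (∑ i, (if σ i then (1:ℝ) else -1) * x i)^(2*k))
        (fun p => (∑ i : Fin (d+1),
            (if (Fin.consEquiv (fun _ : Fin (d+1) => Bool)).symm.symm p i then (1:ℝ) else -1) * x i)^(2*k))
        (fun σ => by simp)]
      rw [Fintype.sum_prod_type]
      rw [Fintype.sum_bool]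
      rw [← Finset.sum_add_distrib]
      refine Finset.sum_congr rfl fun τ _ => ?_
      have key : ∀ b : Bool, ∑ i : Fin (d+1),
          (if (Fin.consEquiv (fun _ : Fin (d+1) => Bool)).symm.symm (b, τ) i then (1:ℝ) else -1) * x i
          = (if b then (1:ℝ) else -1) * a + S τ := fun b => by
        simp [Fin.sum_univ_succ, Fin.consEquiv, hS, ha]
      rw [key true, key false]
      norm_num
      ring
    rw [step0]
    have step1 : ∀ τ : Fin d → Bool, (S τ + a)^(2*k) + (S τ - a)^(2*k)
        = ∑ j ∈ range (k+1),
            2 * ((2*k).choose (2*j) : ℝ) * (S τ)^(2*(k-j)) * a^(2*j) :=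
      fun τ => even_pow_sum (S τ) a k
    rw [Finset.sum_congr rfl fun τ _ => step1 τ, Finset.sum_comm]
    have step2 : ∀ j ∈ range (k+1),
        ∑ τ : Fin d → Bool, 2 * ((2*k).choose (2*j) : ℝ) * (S τ)^(2*(k-j)) * a^(2*j)
        ≤ (2 * ((2*k).choose (2*j) : ℝ) * a^(2*j)) *
            (2^d * (((2*(k-j)-1)‼ : ℝ) * s'^(k-j))) := by
      intro j hj
      have h1 : ∑ τ : Fin d → Bool, 2 * ((2*k).choose (2*j) : ℝ) * (S τ)^(2*(k-j)) * a^(2*j)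
          = (2 * ((2*k).choose (2*j) : ℝ) * a^(2*j)) * ∑ τ, (S τ)^(2*(k-j)) := by
        rw [Finset.mul_sum]; exact Finset.sum_congr rfl fun τ _ => by ring
      rw [h1]
      refine mul_le_mul_of_nonneg_left (moment d (fun i => x i.succ) (k-j)) ?_
      have : a^(2*j) = (a^2)^j := by rw [← pow_mul]
      rw [this]; positivity
    refine le_trans (Finset.sum_le_sum step2) ?_
    have expand : (∑ i : Fin (d+1), x i ^ 2) = a^2 + s' := by
      rw [Fin.sum_univ_succ]
    rw [expand, add_pow, Finset.mul_sum, Finset.mul_sum]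
    refine Finset.sum_le_sum fun j hj => ?_
    have hjk : j ≤ k := Finset.mem_range_succ_iff.mp hj
    have hkey : (((2*k).choose (2*j) * (2*(k-j)-1)‼ : ℕ) : ℝ)
        ≤ (((2*k-1)‼ * k.choose j : ℕ) : ℝ) := by
      exact_mod_cast key_ineq k j hjk
    push_cast at hkey
    have ha2 : a^(2*j) = (a^2)^j := by rw [← pow_mul]
    calc 2 * ((2*k).choose (2*j) : ℝ) * a^(2*j) *
          (2^d * (((2*(k-j)-1)‼ : ℝ) * s'^(k-j)))
        = (((2*k).choose (2*j) : ℝ) * ((2*(k-j)-1)‼ : ℝ)) *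
            (2 * 2^d * (a^2)^j * s'^(k-j)) := by rw [ha2]; ring
      _ ≤ ((((2*k-1)‼ : ℕ) : ℝ) * (k.choose j : ℝ)) *
            (2 * 2^d * (a^2)^j * s'^(k-j)) := by
          refine mul_le_mul_of_nonneg_right hkey (by positivity)
      _ = 2^(d+1) * (((2*k-1)‼ : ℝ) * ((a^2)^j * s'^(k-j) * (k.choose j : ℝ))) := by
          ring


/-- Khintchine's inequality: for independent Rademacher signs `σ` and `x ∈ ℝ^d`,
`(E[|⟨σ,x⟩|^t])^{1/t} ≤ √t · ‖x‖₂` for every integer `t ≥ 1`. -/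
theorem khintchine (d : ℕ) (x : Fin d → ℝ) (t : ℕ) (ht : 1 ≤ t) :
    ((∑ σ : Fin d → Bool, |∑ i, (if σ i then (1 : ℝ) else -1) * x i| ^ t) / 2 ^ d)
        ^ ((1 : ℝ) / t)
      ≤ Real.sqrt t * Real.sqrt (∑ i, x i ^ 2) := by
  classical
  set y : (Fin d → Bool) → ℝ := fun σ => ∑ i, (if σ i then (1:ℝ) else -1) * x i with hy
  set s := ∑ i, x i ^ 2 with hs
  have hs0 : 0 ≤ s := by positivity
  set k := (t+1)/2 with hk
  have hk1 : 1 ≤ k := by omega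
  have htk : t ≤ 2*k := by omega
  have hkt : 2*k - 1 ≤ t := by omega
  have ht0 : (0:ℝ) < t := by exact_mod_cast ht
  have hk0 : (0:ℝ) < 2*(k:ℝ) := by positivity
  have hcard : (Fintype.card (Fin d → Bool) : ℝ) = 2^d := by
    simp [Fintype.card_fun]
  set A := (∑ σ : Fin d → Bool, |y σ| ^ t) / 2 ^ d with hA
  set B := (∑ σ : Fin d → Bool, (y σ) ^ (2*k)) / 2 ^ d with hB
  have hA0 : 0 ≤ A := by positivity
  have hB0 : 0 ≤ B := by
    apply div_nonneg _ (by positivity)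
    exact Finset.sum_nonneg fun σ _ => (even_two_mul k).pow_nonneg _
  have habs : ∀ σ, (|y σ| ^ t) ^ ((2*(k:ℝ))/t) = (y σ)^(2*k) := by
    intro σ
    rw [← Real.rpow_natCast |y σ| t, ← Real.rpow_mul (abs_nonneg _)]
    have : (t:ℝ) * (2*(k:ℝ)/t) = ((2*k : ℕ) : ℝ) := by
      push_cast; field_simp
    rw [this, Real.rpow_natCast, pow_mul, sq_abs, ← pow_mul]
  have step1 : A ≤ B ^ ((t:ℝ)/(2*(k:ℝ))) := by
    have hp : 1 ≤ (2*(k:ℝ))/t := by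
      rw [le_div_iff₀ ht0]
      have : (t:ℝ) ≤ 2*(k:ℝ) := by exact_mod_cast htk
      linarith
    have := Real.arith_mean_le_rpow_mean (univ : Finset (Fin d → Bool))
      (fun _ => (1:ℝ)/2^d) (fun σ => |y σ| ^ t)
      (fun _ _ => by positivity)
      (by simp [Finset.sum_const, hcard])
      (fun _ _ => by positivity) hp
    calc A = ∑ σ : Fin d → Bool, (1:ℝ)/2^d * |y σ| ^ t := by
          rw [hA, Finset.sum_div]
          exact Finset.sum_congr rfl fun σ _ => by ring
      _ ≤ (∑ σ : Fin d → Bool, (1:ℝ)/2^d * (|y σ| ^ t) ^ ((2*(k:ℝ))/t))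
            ^ (1/((2*(k:ℝ))/t)) := this
      _ = B ^ ((t:ℝ)/(2*(k:ℝ))) := by
          rw [one_div_div]
          congr 1
          rw [hB, Finset.sum_div]
          exact Finset.sum_congr rfl fun σ _ => by rw [habs σ]; ring
  have step2 : B ≤ (t:ℝ)^k * s^k := by
    have h1 : B ≤ ((2*k-1)‼ : ℝ) * s^k := by
      rw [hB, div_le_iff₀ (by positivity)]
      calc ∑ σ : Fin d → Bool, (y σ) ^ (2*k) ≤ 2^d * (((2*k-1)‼ : ℝ) * s^k) :=
            moment d x k
        _ = ((2*k-1)‼ : ℝ) * s^k * 2^d := by ring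
    refine h1.trans (mul_le_mul_of_nonneg_right ?_ (by positivity))
    exact_mod_cast dfac_le k t hk1 hkt
  calc A ^ ((1:ℝ)/t) ≤ (B ^ ((t:ℝ)/(2*(k:ℝ)))) ^ ((1:ℝ)/t) :=
        Real.rpow_le_rpow hA0 step1 (by positivity)
    _ = B ^ ((1:ℝ)/(2*(k:ℝ))) := by
        rw [← Real.rpow_mul hB0]
        congr 1
        field_simp
    _ ≤ ((t:ℝ)^k * s^k) ^ ((1:ℝ)/(2*(k:ℝ))) :=
        Real.rpow_le_rpow hB0 step2 (by positivity)
    _ = Real.sqrt t * Real.sqrt s := by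
        rw [← mul_pow, ← Real.rpow_natCast ((t:ℝ)*s) k, ← Real.rpow_mul (by positivity)]
        have : (k:ℝ) * ((1:ℝ)/(2*(k:ℝ))) = 1/2 := by
          field_simp
        rw [this, ← Real.sqrt_eq_rpow, Real.sqrt_mul ht0.le]
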